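/- Let Δ be an integer with Δ ≡ 0 or 1 (mod 4) which is not a perfect square. Then the set of odd primes p not dividing Δ with Jacobi symbol (Δ/p) = 1 is infinite, and the set of odd primes p not dividing Δ with Jacobi symbol (Δ/p) = -1 is infinite. -/

import Mathlib

private lemma isSquare_of_even_factorization {s : ℕ} (hs : s ≠ 0)
    (h : ∀ p, Even (s.factorization p)) : IsSquare s := by
  refine ⟨s.factorization.prod fun p e => p ^ (e / 2), ?_⟩
  conv_lhs => rw [← Nat.factorization_prod_pow_eq_self hs]
  rw [Finsupp.prod, Finsupp.prod, ← Finset.prod_mul_distrib]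
  refine Finset.prod_congr rfl fun p _ => ?_
  rw [← pow_add]
  congr 1
  obtain ⟨k, hk⟩ := h p
  omega

private lemma coprime_of_modeq_one {t b : ℕ} (h : b ≡ 1 [MOD t]) : Nat.Coprime t b := by
  set d := Nat.gcd t b with hd
  have h1 : b % d = 1 % d := h.of_dvd (Nat.gcd_dvd_left _ _)
  rcases Nat.eq_zero_or_pos d with hd0 | hd0
  · have hb0 : b = 0 := Nat.eq_zero_of_gcd_eq_zero_right (hd ▸ hd0)
    have ht0 : t = 0 := Nat.eq_zero_of_gcd_eq_zero_left (hd ▸ hd0)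
    subst hb0; subst ht0
    simp [Nat.ModEq] at h
  · have h2 : b % d = 0 := Nat.mod_eq_zero_of_dvd (Nat.gcd_dvd_right t b)
    have h3 : d ∣ 1 := Nat.dvd_of_mod_eq_zero (by omega)
    exact Nat.dvd_one.mp h3

private lemma dirichlet_step (Δ : ℤ) (hΔ : Δ ≠ 0) {b : ℕ} (hb2 : b % 2 = 1)
    (hg : Int.gcd Δ b = 1) :
    {p : ℕ | p.Prime ∧ p ≠ 2 ∧ ¬((p : ℤ) ∣ Δ) ∧ jacobiSym Δ p = jacobiSym Δ b}.Infinite := by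
  set N := 4 * Δ.natAbs with hN
  have hm : Δ.natAbs ≠ 0 := Int.natAbs_ne_zero.mpr hΔ
  have hN0 : N ≠ 0 := by positivity
  haveI : NeZero N := ⟨hN0⟩
  have hb2' : Nat.Coprime b 2 := by
    rw [Nat.coprime_comm]
    exact Nat.prime_two.coprime_iff_not_dvd.mpr (by omega)
  have hcop : Nat.Coprime b N := by
    have hbm : Nat.Coprime b Δ.natAbs := by
      have : Nat.gcd Δ.natAbs b = 1 := hg
      exact Nat.Coprime.symm this
    have : N = 2 * (2 * Δ.natAbs) := by ring
    rw [this]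
    exact Nat.Coprime.mul_right hb2' (Nat.Coprime.mul_right hb2' hbm)
  have hu : IsUnit (b : ZMod N) := (ZMod.isUnit_iff_coprime b N).mpr hcop
  refine (Nat.infinite_setOfPred_prime_and_eq_mod hu).mono ?_
  rintro p ⟨hp, hpb⟩
  have hmod : p ≡ b [MOD N] := (ZMod.natCast_eq_natCast_iff _ _ _).mp hpb
  have h2N : (2 : ℕ) ∣ N := ⟨2 * Δ.natAbs, by ring⟩
  have hp2 : p % 2 = 1 := by
    have := hmod.of_dvd h2N
    unfold Nat.ModEq at this
    omega
  have hpodd : Odd p := Nat.odd_iff.mpr hp2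
  have hne2 : p ≠ 2 := by omega
  refine ⟨hp, hne2, ?_, ?_⟩
  · intro hdvd
    have hpm : p ∣ Δ.natAbs := Int.natCast_dvd_natCast.mp (Int.dvd_natAbs.mpr hdvd)
    have hpN : p ∣ N := hpm.mul_left 4
    have hpb' : p ∣ b := Nat.modEq_zero_iff_dvd.mp
      ((hmod.of_dvd hpN).symm.trans (Nat.modEq_zero_iff_dvd.mpr dvd_rfl))
    have h1 : p ∣ 1 := hcop ▸ Nat.dvd_gcd hpb' hpN
    exact hp.one_lt.ne' (Nat.dvd_one.mp h1)
  · calc jacobiSym Δ p = jacobiSym Δ (p % (4 * Δ.natAbs)) := jacobiSym.mod_right Δ hpodd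
      _ = jacobiSym Δ (b % (4 * Δ.natAbs)) := by rw [show p % (4 * Δ.natAbs) = b % (4 * Δ.natAbs) from hmod]
      _ = jacobiSym Δ b := (jacobiSym.mod_right Δ (Nat.odd_iff.mpr hb2)).symm

private lemma exists_jacobi_neg_one (Δ : ℤ) (hsq : ¬IsSquare Δ) :
    ∃ b : ℕ, b % 2 = 1 ∧ jacobiSym Δ b = -1 := by
  have hΔ : Δ ≠ 0 := fun h => hsq ⟨0, by rw [h]; ring⟩
  set m := Δ.natAbs with hmdef
  have hm : m ≠ 0 := Int.natAbs_ne_zero.mpr hΔ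
  by_cases hA : ∃ q, q.Prime ∧ q ≠ 2 ∧ Odd (m.factorization q)
  · -- Case A : some odd prime occurs to an odd power in Δ
    obtain ⟨q, hq, hq2, hv⟩ := hA
    haveI : Fact q.Prime := ⟨hq⟩
    set v := m.factorization q with hvdef
    have hqvm : q ^ v ∣ m := Nat.ordProj_dvd m q
    have hqvΔ : ((q : ℤ)) ^ v ∣ Δ := by
      have h1 : ((q ^ v : ℕ) : ℤ) ∣ (m : ℤ) := Int.natCast_dvd_natCast.mpr hqvm
      have h2 : (m : ℤ) ∣ Δ := Int.natAbs_dvd.mpr dvd_rfl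
      exact_mod_cast h1.trans h2
    obtain ⟨c, hc⟩ := hqvΔ
    have hc0 : c ≠ 0 := by
      intro h; rw [h, mul_zero] at hc; exact hΔ hc
    have hqc : ¬((q : ℤ) ∣ c) := by
      intro hd
      have hd1 : ((q : ℤ)) ^ (v + 1) ∣ Δ := by
        rw [hc, pow_succ]
        exact mul_dvd_mul dvd_rfl hd
      have hd2 : q ^ (v + 1) ∣ m := by
        have := Int.natAbs_dvd_natAbs.mpr hd1
        rwa [Int.natAbs_pow, Int.natAbs_natCast] at this
      have := (Nat.Prime.pow_dvd_iff_le_factorization hq hm).mp hd2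
      omega
    have hchar : ringChar (ZMod q) ≠ 2 := by
      rw [ZMod.ringChar_zmod_n]; exact hq2
    obtain ⟨u, hu⟩ := quadraticChar_exists_neg_one hchar
    have hco : (4 * c.natAbs).Coprime q := by
      rw [Nat.coprime_comm]
      refine hq.coprime_iff_not_dvd.mpr ?_
      intro hd
      rcases (Nat.Prime.dvd_mul hq).mp hd with h4 | hcd
      · have h4' : q ∣ 2 ^ 2 := by rwa [show (2 : ℕ) ^ 2 = 4 from rfl]
        have : q ∣ 2 := hq.dvd_of_dvd_pow h4'
        exact hq2 ((Nat.prime_dvd_prime_iff_eq hq Nat.prime_two).mp this)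
      · exact hqc (Int.dvd_natAbs.mp (Int.natCast_dvd_natCast.mpr hcd))
    obtain ⟨b, hb1, hbu⟩ := Nat.chineseRemainder hco 1 u.val
    have hcpos : 1 < 4 * c.natAbs := by
      have : c.natAbs ≠ 0 := Int.natAbs_ne_zero.mpr hc0
      omega
    have hb4c : b % (4 * c.natAbs) = 1 := by
      have := hb1
      unfold Nat.ModEq at this
      rw [this, Nat.mod_eq_of_lt hcpos]
    have hb4 : b % 4 = 1 := by
      have := hb1.of_dvd (dvd_mul_right 4 c.natAbs)
      unfold Nat.ModEq at this
      omega
    have hb2 : b % 2 = 1 := by omega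
    have hbodd : Odd b := Nat.odd_iff.mpr hb2
    refine ⟨b, hb2, ?_⟩
    have hJc : jacobiSym c b = 1 := by
      rw [jacobiSym.mod_right c hbodd, hb4c, jacobiSym.one_right]
    have hJq : jacobiSym (q : ℤ) b = -1 := by
      have hqodd : Odd q := hq.odd_of_ne_two hq2
      rw [jacobiSym.quadratic_reciprocity_one_mod_four' hqodd hb4,
        ← jacobiSym.legendreSym.to_jacobiSym]
      have hbu' : ((b : ℕ) : ZMod q) = u := by
        have h1 : ((b : ℕ) : ZMod q) = ((u.val : ℕ) : ZMod q) :=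
          (ZMod.natCast_eq_natCast_iff _ _ _).mpr hbu
        rw [h1, ZMod.natCast_rightInverse u]
      rw [legendreSym]
      rw [show (((b : ℕ) : ℤ) : ZMod q) = ((b : ℕ) : ZMod q) by push_cast; rfl]
      rw [hbu']
      exact hu
    calc jacobiSym Δ b = jacobiSym ((q : ℤ) ^ v * c) b := by rw [← hc]
      _ = jacobiSym ((q : ℤ) ^ v) b * jacobiSym c b := jacobiSym.mul_left _ _ _
      _ = jacobiSym (q : ℤ) b ^ v * 1 := by rw [jacobiSym.pow_left, hJc]
      _ = -1 := by rw [hJq, hv.neg_one_pow, mul_one]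
  · -- Case B : every odd prime occurs to an even power, so Δ = ±2^a * t^2
    push_neg at hA
    have hA' : ∀ p, p.Prime → p ≠ 2 → Even (m.factorization p) := fun p hp hp2 => by
      rcases Nat.even_or_odd (m.factorization p) with h | h
      · exact h
      · exact absurd h (hA p hp hp2)
    set a := m.factorization 2 with hadef
    set s := m / 2 ^ a with hsdef
    have hms : 2 ^ a * s = m := Nat.ordProj_mul_ordCompl_eq_self m 2
    have hs0 : s ≠ 0 := (Nat.ordCompl_pos 2 hm).ne'
    have hsodd : ¬(2 ∣ s) := Nat.not_dvd_ordCompl Nat.prime_two hm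
    have hssq : IsSquare s := by
      refine isSquare_of_even_factorization hs0 fun p => ?_
      have hfs : s.factorization = m.factorization.erase 2 := Nat.factorization_ordCompl m 2
      rcases eq_or_ne p 2 with rfl | hp2
      · rw [hfs, Finsupp.erase_same]; exact Even.zero
      · rw [hfs, Finsupp.erase_ne hp2]
        by_cases hp : p.Prime
        · exact hA' p hp hp2
        · rw [Nat.factorization_eq_zero_of_not_prime m hp]; exact Even.zero
    obtain ⟨t, ht⟩ := hssq
    have ht2 : ¬(2 ∣ t) := fun h2 => hsodd (ht ▸ h2.mul_right t)
    have hco8 : Nat.Coprime 8 t := by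
      have h1 : Nat.Coprime 2 t := Nat.prime_two.coprime_iff_not_dvd.mpr ht2
      have : (8 : ℕ) = 2 ^ 3 := by norm_num
      rw [this]
      exact h1.pow_left 3
    rcases Int.natAbs_eq Δ with hsgn | hsgn
    · -- Δ = m : then a must be odd
      have ha : Odd a := by
        by_contra hae
        rw [Nat.not_odd_iff_even] at hae
        obtain ⟨k, hk⟩ := hae
        refine hsq ⟨((2 : ℤ) ^ k * (t : ℕ)), ?_⟩
        rw [hsgn, ← hmdef, ← hms, ht, hk]
        push_cast
        ring
      obtain ⟨b, hb8, hbt⟩ := Nat.chineseRemainder hco8 5 1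
      have hb8' : b % 8 = 5 := by
        have := hb8; unfold Nat.ModEq at this; omega
      have hb2 : b % 2 = 1 := by omega
      have hbodd : Odd b := Nat.odd_iff.mpr hb2
      refine ⟨b, hb2, ?_⟩
      have hgt : Int.gcd ((t : ℕ) : ℤ) b = 1 := by
        have := coprime_of_modeq_one hbt
        simpa [Int.gcd] using this
      have hΔeq : Δ = (2 : ℤ) ^ a * ((t : ℕ) : ℤ) ^ 2 := by
        rw [hsgn, ← hmdef, ← hms, ht]
        push_cast
        ring
      rw [hΔeq, jacobiSym.mul_left, jacobiSym.pow_left, jacobiSym.sq_one' hgt,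
        jacobiSym.at_two hbodd, mul_one]
      have hχ : ZMod.χ₈ (b : ZMod 8) = -1 := by
        rw [ZMod.χ₈_nat_mod_eight, hb8']
        decide
      rw [hχ, ha.neg_one_pow]
    · -- Δ = -m
      obtain ⟨b, hb8, hbt⟩ := Nat.chineseRemainder hco8 7 1
      have hb8' : b % 8 = 7 := by
        have := hb8; unfold Nat.ModEq at this; omega
      have hb2 : b % 2 = 1 := by omega
      have hbodd : Odd b := Nat.odd_iff.mpr hb2
      refine ⟨b, hb2, ?_⟩
      have hgt : Int.gcd ((t : ℕ) : ℤ) b = 1 := by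
        have := coprime_of_modeq_one hbt
        simpa [Int.gcd] using this
      have hΔeq : Δ = (-1) * ((2 : ℤ) ^ a * ((t : ℕ) : ℤ) ^ 2) := by
        rw [hsgn, ← hmdef, ← hms, ht]
        push_cast
        ring
      rw [hΔeq, jacobiSym.mul_left, jacobiSym.mul_left, jacobiSym.pow_left,
        jacobiSym.sq_one' hgt, jacobiSym.at_two hbodd, jacobiSym.at_neg_one hbodd, mul_one]
      have hχ8 : ZMod.χ₈ (b : ZMod 8) = 1 := by
        rw [ZMod.χ₈_nat_mod_eight, hb8']
        decide
      have hχ4 : ZMod.χ₄ (b : ZMod 4) = -1 := by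
        have hb4 : b % 4 = 3 := by omega
        rw [ZMod.χ₄_nat_mod_four, hb4]
        decide
      rw [hχ8, hχ4, one_pow, mul_one]

theorem infinite_primes_jacobiSym (Δ : ℤ) (h4 : Δ % 4 = 0 ∨ Δ % 4 = 1) (hsq : ¬IsSquare Δ) :
    {p : ℕ | p.Prime ∧ p ≠ 2 ∧ ¬((p : ℤ) ∣ Δ) ∧ jacobiSym Δ p = 1}.Infinite ∧
    {p : ℕ | p.Prime ∧ p ≠ 2 ∧ ¬((p : ℤ) ∣ Δ) ∧ jacobiSym Δ p = -1}.Infinite := by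
  have hΔ : Δ ≠ 0 := fun h => hsq ⟨0, by rw [h]; ring⟩
  constructor
  · have := dirichlet_step Δ hΔ (b := 1) (by norm_num) (by simp [Int.gcd])
    simpa [jacobiSym.one_right] using this
  · obtain ⟨b, hb2, hJ⟩ := exists_jacobi_neg_one Δ hsq
    have hg : Int.gcd Δ b = 1 := by
      by_contra hg
      have h0 : jacobiSym Δ b = 0 := jacobiSym.eq_zero_iff.mpr ⟨by omega, hg⟩
      rw [hJ] at h0; norm_num at h0
    have := dirichlet_step Δ hΔ hb2 hg
    rw [hJ] at this
    exact this
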